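/- Let L ⊆ S¹ be a closed arc of length strictly less than π. Suppose θ, θ' ∈ [0, 2π] are such that e^{iθ} ∈ L and e^{iθ'} ∈ L with θ' = 2π or θ' = 0 corresponding to an endpoint configuration where the firing oscillator has phase 0 (mod 2π) in L. If Ψ satisfies Ψ(φ) ∈ (0, φ) for φ ∈ (0, π) and Ψ(φ) ∈ (φ, 2π) for φ ∈ (π, 2π), Ψ(0)=0, Ψ(2π)=2π, and the point 1 = e^{i·0} lies in L, then e^{iΨ(θ)} ∈ L for every θ with e^{iθ} ∈ L. -/
import Mathlib


open Real Set

/-- Let `L` be a closed arc of the unit circle of length `d < π` containing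
the point `1 = e^{i·0}` (the position of the firing oscillator, whose phase is `0 mod 2π`).
If `Ψ` satisfies Assumption 1, then the jump `θ ↦ Ψ(θ)` maps every phase whose circle point
lies in `L` to a phase whose circle point again lies in `L`. -/
theorem arc_invariance (α d : ℝ) (hd0 : 0 ≤ d) (hdπ : d < π)
    (L : Set ℂ)
    (hL : L = {z : ℂ | ∃ φ ∈ Set.Icc α (α + d), z = Complex.exp (Complex.I * (φ : ℂ))})
    (h1L : (1 : ℂ) ∈ L)
    (Ψ : ℝ → ℝ) (h0 : Ψ 0 = 0) (h2π : Ψ (2 * π) = 2 * π)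
    (hlow : ∀ φ ∈ Set.Ioo 0 π, Ψ φ ∈ Set.Ioo 0 φ)
    (hhigh : ∀ φ ∈ Set.Ioo π (2 * π), Ψ φ ∈ Set.Ioo φ (2 * π)) :
    ∀ θ ∈ Set.Icc 0 (2 * π), Complex.exp (Complex.I * (θ : ℂ)) ∈ L →
      Complex.exp (Complex.I * (Ψ θ : ℂ)) ∈ L := by
  subst hL
  intro θ hθ hθL
  obtain ⟨φ₀, hφ₀, h1⟩ := h1L
  obtain ⟨φ, hφ, hθe⟩ := hθL
  have h1' : Complex.exp (Complex.I * φ₀) = 1 := h1.symm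
  rw [Complex.exp_eq_one_iff] at h1'
  obtain ⟨k, hk⟩ := h1'
  have hφ₀k : φ₀ = k * (2 * π) := by
    have := congrArg Complex.im hk
    simpa using this
  rw [Complex.exp_eq_exp_iff_exists_int] at hθe
  obtain ⟨n, hn⟩ := hθe
  have hφn : φ = θ - n * (2 * π) := by
    have := congrArg Complex.im hn
    simp at this
    linarith
  have hpi := Real.pi_pos
  rcases eq_or_lt_of_le hθ.1 with h | hθ0
  · -- θ = 0
    exact ⟨φ, hφ, by rw [← h, h0]; rw [Complex.exp_eq_exp_iff_exists_int]; exact ⟨n, by rw [hφn, ← h]; push_cast; ring⟩⟩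
  rcases eq_or_lt_of_le hθ.2 with h | hθ2
  · -- θ = 2π
    exact ⟨φ, hφ, by rw [h, h2π]; rw [Complex.exp_eq_exp_iff_exists_int]; exact ⟨n, by rw [hφn, h]; push_cast; ring⟩⟩
  have hdist : |φ - φ₀| ≤ d := by
    rw [abs_le]; constructor <;> [linarith [hφ.1, hφ₀.2]; linarith [hφ.2, hφ₀.1]]
  have hb : |θ - ((n : ℝ) + k) * (2 * π)| < π := by
    calc |θ - ((n : ℝ) + k) * (2 * π)| = |φ - φ₀| := by rw [hφn, hφ₀k]; congr 1; ring
      _ ≤ d := hdist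
      _ < π := hdπ
  rw [abs_lt] at hb
  refine ⟨Ψ θ - n * (2 * π), ?_, ?_⟩
  · rcases lt_trichotomy θ π with hc | hc | hc
    · -- 0 < θ < π : n + k = 0
      have hm : (n + k : ℤ) = 0 := by
        have h1 : ((n + k : ℤ) : ℝ) < 1 := by push_cast; nlinarith
        have h2 : (-1 : ℝ) < ((n + k : ℤ) : ℝ) := by push_cast; nlinarith
        have := (by exact_mod_cast h1 : (n + k : ℤ) < 1)
        have := (by exact_mod_cast h2 : (-1 : ℤ) < n + k)
        omega
      have hkn : (k : ℝ) = -(n : ℝ) := by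
        have : ((n : ℤ) : ℝ) + (k : ℝ) = 0 := by exact_mod_cast congrArg (Int.cast : ℤ → ℝ) hm
        linarith
      obtain ⟨hΨ1, hΨ2⟩ := hlow θ ⟨hθ0, hc⟩
      constructor
      · have := hφ₀.1; rw [hφ₀k, hkn] at this; linarith
      · have := hφ.2; rw [hφn] at this; linarith
    · -- θ = π : impossible
      exfalso
      have h1 : ((n + k : ℤ) : ℝ) < 1 := by push_cast; nlinarith
      have h2 : (0 : ℝ) < ((n + k : ℤ) : ℝ) := by push_cast; nlinarith
      have := (by exact_mod_cast h1 : (n + k : ℤ) < 1)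
      have := (by exact_mod_cast h2 : (0 : ℤ) < n + k)
      omega
    · -- π < θ < 2π : n + k = 1
      have hm : (n + k : ℤ) = 1 := by
        have h1 : ((n + k : ℤ) : ℝ) < 2 := by push_cast; nlinarith
        have h2 : (0 : ℝ) < ((n + k : ℤ) : ℝ) := by push_cast; nlinarith
        have := (by exact_mod_cast h1 : (n + k : ℤ) < 2)
        have := (by exact_mod_cast h2 : (0 : ℤ) < n + k)
        omega
      have hkn : (k : ℝ) = 1 - (n : ℝ) := by
        have : ((n : ℤ) : ℝ) + (k : ℝ) = 1 := by exact_mod_cast congrArg (Int.cast : ℤ → ℝ) hm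
        linarith
      obtain ⟨hΨ1, hΨ2⟩ := hhigh θ ⟨hc, hθ2⟩
      constructor
      · have := hφ.1; rw [hφn] at this; linarith
      · have := hφ₀.2; rw [hφ₀k, hkn] at this; linarith
  · rw [Complex.exp_eq_exp_iff_exists_int]; exact ⟨n, by push_cast; ring⟩
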